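/- For all real numbers u with 0 ≤ u ≤ K, K > 0, s ≥ 0, and any integer n ≥ 2, one has e^{su} - 1 ≤ Σ_{k=1}^{n-1} (s^k/k!) u^k + ((e^{sK} - Σ_{k=0}^{n-1} s^k K^k / k!)/K^n) u^n. -/

import Mathlib

theorem taylor_exp_remainder_bound (u K s : ℝ) (hu : 0 ≤ u) (huK : u ≤ K)
    (hK : 0 < K) (hs : 0 ≤ s) (n : ℕ) (hn : 2 ≤ n) :
    Real.exp (s * u) - 1 ≤
      (∑ k ∈ Finset.Icc 1 (n - 1), s ^ k / (Nat.factorial k : ℝ) * u ^ k) +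
        ((Real.exp (s * K) - ∑ k ∈ Finset.range n, s ^ k * K ^ k / (Nat.factorial k : ℝ)) / K ^ n)
          * u ^ n := by
  have hsum : ∀ x : ℝ, Summable (fun k : ℕ => x ^ k / k.factorial) :=
    fun x => Real.summable_pow_div_factorial x
  have hexp : ∀ x : ℝ, Real.exp x =
      (∑ k ∈ Finset.range n, x ^ k / k.factorial) +
        ∑' k : ℕ, x ^ (k + n) / (k + n).factorial := by
    intro x
    rw [Real.exp_eq_exp_ℝ, NormedSpace.exp_eq_tsum_div]
    exact (Summable.sum_add_tsum_nat_add n (hsum x)).symm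
  -- tail function
  set T : ℝ → ℝ := fun x => ∑' k : ℕ, x ^ (k + n) / (k + n).factorial with hT
  have hKn : (0:ℝ) < K ^ n := pow_pos hK n
  have key : T (s * u) * K ^ n ≤ T (s * K) * u ^ n := by
    rw [hT]
    rw [← tsum_mul_right, ← tsum_mul_right]
    refine Summable.tsum_le_tsum ?_ (((hsum (s*u)).comp_injective (add_left_injective n)).mul_right _)
      (((hsum (s*K)).comp_injective (add_left_injective n)).mul_right _)
    intro k
    have hsu : 0 ≤ s * u := mul_nonneg hs hu
    have h1 : (s*u)^(k+n) * K^n = s^(k+n) * u^k * (u^n * K^n) := by ring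
    have h2 : (s*K)^(k+n) * u^n = s^(k+n) * K^k * (K^n * u^n) := by ring
    have hfac : (0:ℝ) < (k+n).factorial := by positivity
    rw [div_mul_eq_mul_div, div_mul_eq_mul_div, div_le_div_iff₀ hfac hfac]
    rw [h1, h2]
    nlinarith [mul_nonneg (mul_nonneg (mul_nonneg (pow_nonneg hs (k+n)) (pow_nonneg hu n))
      (pow_nonneg hK.le n)) (sub_nonneg.2 (pow_le_pow_left₀ hu huK k))]
  have hTu : T (s * u) ≤ T (s * K) * u ^ n / K ^ n := by
    rw [le_div_iff₀ hKn]; exact key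
  -- rewrite exp (s*K) tail
  have hsumK : (∑ k ∈ Finset.range n, s ^ k * K ^ k / (k.factorial : ℝ))
      = ∑ k ∈ Finset.range n, (s * K) ^ k / k.factorial := by
    refine Finset.sum_congr rfl fun k _ => ?_; rw [mul_pow]
  have hRK : Real.exp (s * K) - ∑ k ∈ Finset.range n, s ^ k * K ^ k / (k.factorial : ℝ)
      = T (s * K) := by
    rw [hsumK, hexp (s*K)]; ring
  -- rewrite Icc sum
  have hsumU : (∑ k ∈ Finset.Icc 1 (n-1), s ^ k / (k.factorial : ℝ) * u ^ k)
      = (∑ k ∈ Finset.range n, (s*u) ^ k / k.factorial) - 1 := by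
    have h1 : Finset.range n = Finset.Icc 0 (n-1) := by
      rw [← Finset.Ico_add_one_right_eq_Icc, Finset.range_eq_Ico]
      congr 1; omega
    have h2 : Finset.Icc 1 (n-1) = Finset.Ico 1 n := by
      rw [← Finset.Ico_add_one_right_eq_Icc]; congr 1; omega
    rw [h2, Finset.range_eq_Ico,
      Finset.sum_eq_sum_Ico_succ_bot (by omega : 0 < n)]
    simp only [pow_zero, Nat.factorial_zero, Nat.cast_one, div_one]
    have : ∀ k ∈ Finset.Ico 1 n, s ^ k / (k.factorial : ℝ) * u ^ k
        = (s*u)^k / k.factorial := by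
      intro k _; rw [mul_pow]; ring
    rw [Finset.sum_congr rfl this]; ring
  have hEU := hexp (s*u)
  rw [hsumU, hRK]
  have : T (s*K) / K^n * u^n = T (s*K) * u^n / K^n := by ring
  rw [this]
  linarith
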